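/- If a Markov transition semigroup (U_t) on a Polish space X is strong Feller at some time t₁ > 0 and irreducible at some time t₂ > 0, and μ, ν are invariant probability measures for (U_t), then μ = ν (uniqueness of the invariant measure via regularity). -/

import Mathlib

open MeasureTheory Filter

/-- Uniqueness of the invariant measure via regularity (Khas'minskii + Doob): if a
Markov transition semigroup (P_t) on a Polish space X is strong Feller at some time
t₁ > 0 and irreducible at some time t₂ > 0, then any two invariant probability
measures μ, ν for (P_t) coincide. -/
theorem stmt16 {X : Type} [MetricSpace X] [TopologicalSpace.SeparableSpace X] [CompleteSpace X]
    [MeasurableSpace X] [BorelSpace X]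
    (P : ℝ → X → Measure X)
    (hprob : ∀ t x, IsProbabilityMeasure (P t x))
    (hmeas : ∀ t : ℝ, ∀ A : Set X, MeasurableSet A → Measurable fun x => P t x A)
    (hP0 : ∀ x, P 0 x = Measure.dirac x)
    (hCK : ∀ t s : ℝ, 0 ≤ t → 0 ≤ s → ∀ x, ∀ A : Set X, MeasurableSet A →
      P (t + s) x A = ∫⁻ y, P s y A ∂(P t x))
    (t₁ : ℝ) (ht₁ : 0 < t₁)
    (hSF : ∀ φ : X → ℝ, Measurable φ → (∃ K : ℝ, ∀ x, |φ x| ≤ K) →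
      Continuous fun x => ∫ y, φ y ∂(P t₁ x))
    (t₂ : ℝ) (ht₂ : 0 < t₂)
    (hirr : ∀ x : X, ∀ Γ : Set X, IsOpen Γ → Γ.Nonempty → 0 < P t₂ x Γ)
    (μ ν : Measure X) [IsProbabilityMeasure μ] [IsProbabilityMeasure ν]
    (hμ : ∀ t : ℝ, 0 ≤ t → ∀ A : Set X, MeasurableSet A → ∫⁻ x, P t x A ∂μ = μ A)
    (hν : ∀ t : ℝ, 0 ≤ t → ∀ A : Set X, MeasurableSet A → ∫⁻ x, P t x A ∂ν = ν A) :
    μ = ν := by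
  -- time T = t₂ + t₁
  set T : ℝ := t₂ + t₁ with hT
  have hT0 : 0 ≤ T := by positivity
  -- Khas'minskii: if P T x₀ A > 0 for some x₀ then for all x
  have khas : ∀ A : Set X, MeasurableSet A → ∀ x₀ : X, 0 < P T x₀ A → ∀ x, 0 < P T x A := by
    intro A hA x₀ h0 x
    have hck : ∀ z, P T z A = ∫⁻ y, P t₁ y A ∂(P t₂ z) :=
      fun z => hCK t₂ t₁ ht₂.le ht₁.le z A hA
    -- continuity of y ↦ (P t₁ y A).toReal via strong Feller with indicator
    have hcont : Continuous fun y => ((P t₁ y A).toReal) := by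
      have hφm : Measurable (A.indicator (fun _ => (1:ℝ))) :=
        measurable_const.indicator hA
      have hφb : ∃ K : ℝ, ∀ x, |A.indicator (fun _ => (1:ℝ)) x| ≤ K := by
        refine ⟨1, fun x => ?_⟩
        by_cases hx : x ∈ A <;> simp [Set.indicator, hx]
      have := hSF _ hφm hφb
      have heq : ∀ y : X, (∫ z, A.indicator (fun _ => (1:ℝ)) z ∂(P t₁ y)) = (P t₁ y A).toReal := by
        intro y
        have : (fun z => A.indicator (fun _ => (1:ℝ)) z) = A.indicator 1 := rfl
        rw [this, integral_indicator_one hA]; rfl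
      simpa [heq] using this
    set U : Set X := {y | 0 < P t₁ y A} with hU
    have hUopen : IsOpen U := by
      have : U = (fun y => (P t₁ y A).toReal) ⁻¹' Set.Ioi 0 := by
        ext y
        have := hprob t₁ y
        simp only [hU, Set.mem_setOf_eq, Set.mem_preimage, Set.mem_Ioi]
        rw [ENNReal.toReal_pos_iff]
        constructor
        · intro h; exact ⟨h, measure_lt_top _ _⟩
        · intro h; exact h.1
      rw [this]
      exact hcont.isOpen_preimage _ isOpen_Ioi
    have hUne : U.Nonempty := by
      by_contra hne
      rw [Set.not_nonempty_iff_eq_empty] at hne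
      have hz : ∀ y, P t₁ y A = 0 := by
        intro y
        by_contra hy
        have : y ∈ U := by
          simp only [hU, Set.mem_setOf_eq]
          exact pos_iff_ne_zero.mpr hy
        simp [hne] at this
      rw [hck x₀] at h0
      simp [hz] at h0
    -- now positivity for arbitrary x
    rw [hck x]
    have hUm : MeasurableSet U := hUopen.measurableSet
    have hx : 0 < P t₂ x U := hirr x U hUopen hUne
    have hres : 0 < ∫⁻ y, P t₁ y A ∂((P t₂ x).restrict U) := by
      rcases eq_or_lt_of_le (show (0:ENNReal) ≤ ∫⁻ y, P t₁ y A ∂((P t₂ x).restrict U) from zero_le) with h | h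
      · exfalso
        have := (lintegral_eq_zero_iff (hmeas t₁ A hA)).mp h.symm
        have h2 : (P t₂ x).restrict U {y | ¬ P t₁ y A = 0} = 0 := by
          exact ae_iff.mp this
        have hsub : U ⊆ {y | ¬ P t₁ y A = 0} := by
          intro y hy
          exact fun hz => by simp [hU, hz] at hy
        have : (P t₂ x).restrict U U = 0 :=
          le_antisymm (h2 ▸ measure_mono hsub) zero_le
        rw [Measure.restrict_apply_self] at this
        exact absurd this hx.ne'
      · exact h
    calc (0:ENNReal) < ∫⁻ y, P t₁ y A ∂((P t₂ x).restrict U) := hres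
      _ ≤ ∫⁻ y, P t₁ y A ∂(P t₂ x) := lintegral_mono' Measure.restrict_le_self le_rfl
  -- Hahn decomposition
  obtain ⟨S, hS, hSp, hSn⟩ := hahn_decomposition (μ := μ) (ν := ν)
  rcases lt_or_ge (ν S) (μ S) with hlt | hge
  · -- contradiction case
    exfalso
    set g : X → ENNReal := fun x => P T x S with hg
    have hgm : Measurable g := hmeas T S hS
    have hg1 : ∀ x, g x ≤ 1 := fun x => by have := hprob T x; exact prob_le_one
    have hμS : ∫⁻ x, g x ∂μ = μ S := hμ T hT0 S hS
    have hνS : ∫⁻ x, g x ∂ν = ν S := hν T hT0 S hS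
    -- restriction inequalities
    have hle1 : ν.restrict S ≤ μ.restrict S := by
      refine Measure.le_intro (fun t ht _ => ?_)
      rw [Measure.restrict_apply ht, Measure.restrict_apply ht]
      exact hSp _ (ht.inter hS) Set.inter_subset_right
    have hle2 : μ.restrict Sᶜ ≤ ν.restrict Sᶜ := by
      refine Measure.le_intro (fun t ht _ => ?_)
      rw [Measure.restrict_apply ht, Measure.restrict_apply ht]
      exact hSn _ (ht.inter hS.compl) Set.inter_subset_right
    set ρp : Measure X := μ.restrict S - ν.restrict S with hρp
    set ρm : Measure X := ν.restrict Sᶜ - μ.restrict Sᶜ with hρm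
    have hρpadd : ρp + ν.restrict S = μ.restrict S := Measure.sub_add_cancel_of_le hle1
    have hρmadd : ρm + μ.restrict Sᶜ = ν.restrict Sᶜ := Measure.sub_add_cancel_of_le hle2
    set a : ENNReal := ∫⁻ x in S, g x ∂μ with ha
    set b : ENNReal := ∫⁻ x in Sᶜ, g x ∂μ with hb
    set a' : ENNReal := ∫⁻ x in S, g x ∂ν with ha'
    set b' : ENNReal := ∫⁻ x in Sᶜ, g x ∂ν with hb'
    set Ap : ENNReal := ∫⁻ x, g x ∂ρp with hAp
    set Am : ENNReal := ∫⁻ x, g x ∂ρm with hAm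
    have hsplit1 : a + b = μ S := by rw [ha, hb, lintegral_add_compl g hS, hμS]
    have hsplit2 : a' + b' = ν S := by rw [ha', hb', lintegral_add_compl g hS, hνS]
    have haeq : a = Ap + a' := by
      rw [ha, ← hρpadd, lintegral_add_measure]
    have hb'eq : b' = Am + b := by
      rw [hb', ← hρmadd, lintegral_add_measure]
    have hbound : ∀ m : Measure X, ∫⁻ x, g x ∂m ≤ m Set.univ := by
      intro m
      calc ∫⁻ x, g x ∂m ≤ ∫⁻ _, 1 ∂m := lintegral_mono hg1
        _ = m Set.univ := lintegral_one
    have hρpuniv : ρp Set.univ = μ S - ν S := by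
      rw [hρp, Measure.sub_apply MeasurableSet.univ hle1,
        Measure.restrict_apply_univ, Measure.restrict_apply_univ]
    have hAple : Ap ≤ μ S - ν S := by rw [← hρpuniv]; exact hbound ρp
    -- finiteness
    have ha'fin : a' ≠ ⊤ := by
      refine ne_top_of_le_ne_top ?_ ((hbound (ν.restrict S)))
      rw [Measure.restrict_apply_univ]
      exact measure_ne_top ν S
    have hbfin : b ≠ ⊤ := by
      refine ne_top_of_le_ne_top ?_ ((hbound (μ.restrict Sᶜ)))
      rw [Measure.restrict_apply_univ]
      exact measure_ne_top μ Sᶜ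
    have hcfin : μ S - ν S ≠ ⊤ := by
      exact ne_top_of_le_ne_top (measure_ne_top μ S) tsub_le_self
    -- μ S = ν S + (μ S - ν S)
    have hμeq : μ S = ν S + (μ S - ν S) := by
      rw [add_comm, tsub_add_cancel_of_le hlt.le]
    -- derive Am = 0
    have key : a' + b + (μ S - ν S) + Am ≤ a' + b + (μ S - ν S) := by
      have h1 : a + b = a' + (Am + b) + (μ S - ν S) := by
        calc a + b = μ S := hsplit1
          _ = ν S + (μ S - ν S) := hμeq
          _ = (a' + b') + (μ S - ν S) := by rw [hsplit2]
          _ = a' + (Am + b) + (μ S - ν S) := by rw [hb'eq]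
      have h2 : a + b ≤ (μ S - ν S) + a' + b := by
        rw [haeq]
        gcongr
      calc a' + b + (μ S - ν S) + Am = a + b := by rw [h1]; ring
        _ ≤ (μ S - ν S) + a' + b := h2
        _ = a' + b + (μ S - ν S) := by ring
    have hAm0 : Am = 0 := by
      have hfin : a' + b + (μ S - ν S) ≠ ⊤ := by
        simp [ENNReal.add_ne_top, ha'fin, hbfin, hcfin]
      have h2 : (a' + b + (μ S - ν S)) + Am ≤ (a' + b + (μ S - ν S)) + 0 := by
        simpa using key
      have h3 := (ENNReal.add_le_add_iff_left hfin).mp h2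
      exact le_antisymm (by simpa using h3) zero_le
    -- ρm is nonzero
    have hρmuniv : ρm Set.univ = ν Sᶜ - μ Sᶜ := by
      rw [hρm, Measure.sub_apply MeasurableSet.univ hle2,
        Measure.restrict_apply_univ, Measure.restrict_apply_univ]
    have hcompl : μ Sᶜ < ν Sᶜ := by
      by_contra hc
      push_neg at hc
      have h1 : ν S + ν Sᶜ = 1 := by
        rw [← measure_union (disjoint_compl_right) hS.compl, Set.union_compl_self]
        exact measure_univ
      have h2 : μ S + μ Sᶜ = 1 := by
        rw [← measure_union (disjoint_compl_right) hS.compl, Set.union_compl_self]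
        exact measure_univ
      have : (1:ENNReal) < 1 := by
        calc (1:ENNReal) = ν S + ν Sᶜ := h1.symm
          _ < μ S + μ Sᶜ := ENNReal.add_lt_add_of_lt_of_le (measure_ne_top ν Sᶜ) hlt hc
          _ = 1 := h2
      exact lt_irrefl _ this
    have hρmpos : 0 < ρm Set.univ := by
      rw [hρmuniv]
      exact tsub_pos_of_lt hcompl
    -- from Am = 0, get a point where g = 0
    have hgz : ∃ x₀, g x₀ = 0 := by
      by_contra hno
      push_neg at hno
      have := (lintegral_eq_zero_iff hgm).mp hAm0
      have h2 : ρm {x | ¬ g x = 0} = 0 := by exact ae_iff.mp this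
      have : ρm Set.univ = 0 := by
        have : {x | ¬ g x = 0} = Set.univ := by
          ext x; simp [hno x]
        rwa [this] at h2
      exact absurd this hρmpos.ne'
    obtain ⟨x₀, hx₀⟩ := hgz
    -- by Khas'minskii, g ≡ 0
    have hgall : ∀ x, g x = 0 := by
      intro x
      by_contra hx
      have h5 := khas S hS x (pos_iff_ne_zero.mpr hx) x₀
      have hx₀' : P T x₀ S = 0 := hx₀
      rw [hx₀'] at h5
      exact lt_irrefl _ h5
    have : μ S = 0 := by
      rw [← hμS]
      simp [hgall]
    rw [this] at hlt
    exact absurd hlt (by simp)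
  · -- equality case: μ S = ν S, deduce μ = ν
    have hSeq : μ S = ν S := le_antisymm hge (hSp S hS subset_rfl)
    have hScomp : μ Sᶜ = ν Sᶜ := by
      have h1 : μ S + μ Sᶜ = 1 := by
        rw [← measure_union disjoint_compl_right hS.compl, Set.union_compl_self]
        exact measure_univ
      have h2 : ν S + ν Sᶜ = 1 := by
        rw [← measure_union disjoint_compl_right hS.compl, Set.union_compl_self]
        exact measure_univ
      have h3 := h1.trans h2.symm
      rw [hSeq] at h3
      exact (ENNReal.add_right_inj (measure_ne_top ν S)).mp h3
    have eqS : ∀ A : Set X, MeasurableSet A → μ (A ∩ S) = ν (A ∩ S) := by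
      intro A hA
      have hle : ν (A ∩ S) ≤ μ (A ∩ S) := hSp _ (hA.inter hS) Set.inter_subset_right
      have hle2 : ν (S \ A) ≤ μ (S \ A) := hSp _ (hS.diff hA) Set.diff_subset
      by_contra hne
      have hlt2 : ν (A ∩ S) < μ (A ∩ S) := lt_of_le_of_ne hle (fun h => hne h.symm)
      have hμsum : μ (A ∩ S) + μ (S \ A) = μ S := by
        rw [Set.inter_comm]; exact measure_inter_add_diff S hA
      have hνsum : ν (A ∩ S) + ν (S \ A) = ν S := by
        rw [Set.inter_comm]; exact measure_inter_add_diff S hA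
      have : ν S < μ S := by
        rw [← hμsum, ← hνsum]
        exact ENNReal.add_lt_add_of_lt_of_le (measure_ne_top ν _) hlt2 hle2
      exact absurd hSeq this.ne'
    have eqSc : ∀ A : Set X, MeasurableSet A → μ (A ∩ Sᶜ) = ν (A ∩ Sᶜ) := by
      intro A hA
      have hle : μ (A ∩ Sᶜ) ≤ ν (A ∩ Sᶜ) := hSn _ (hA.inter hS.compl) Set.inter_subset_right
      have hle2 : μ (Sᶜ \ A) ≤ ν (Sᶜ \ A) := hSn _ (hS.compl.diff hA) Set.diff_subset
      by_contra hne
      have hlt2 : μ (A ∩ Sᶜ) < ν (A ∩ Sᶜ) := lt_of_le_of_ne hle hne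
      have hμsum : μ (A ∩ Sᶜ) + μ (Sᶜ \ A) = μ Sᶜ := by
        rw [Set.inter_comm]; exact measure_inter_add_diff Sᶜ hA
      have hνsum : ν (A ∩ Sᶜ) + ν (Sᶜ \ A) = ν Sᶜ := by
        rw [Set.inter_comm]; exact measure_inter_add_diff Sᶜ hA
      have : μ Sᶜ < ν Sᶜ := by
        rw [← hμsum, ← hνsum]
        exact ENNReal.add_lt_add_of_lt_of_le (measure_ne_top μ _) hlt2 hle2
      exact absurd hScomp this.ne
    ext A hA
    calc μ A = μ (A ∩ S) + μ (A \ S) := (measure_inter_add_diff A hS).symm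
      _ = ν (A ∩ S) + ν (A \ S) := by
          rw [eqS A hA]
          congr 1
          · exact eqSc A hA
      _ = ν A := measure_inter_add_diff A hS
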